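/- Let $\mathcal{L}$ be a distraction matrix and let $I$ be a monomial ideal of $P$ generated by monomials $t_1,\dots,t_r$. Then $D_{\mathcal{L}}(I) := \bigoplus_d D_{\mathcal{L}}(I_d)$ is a homogeneous ideal of $P$, and it equals the ideal generated by $D_{\mathcal{L}}(t_1),\dots,D_{\mathcal{L}}(t_r)$. -/

import Mathlib

open MvPolynomial

noncomputable section
/-- A distraction matrix: a family of linear forms `L i j` (`1 ≤ i ≤ n`, `j ∈ ℕ`) such that
every selection `L 1 j₁, …, L n jₙ` spans the space of linear forms, and every row is
eventually constant. -/
def IsDistractionMatrix (n : ℕ) (K : Type*) [Field K]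
    (L : Fin n → ℕ → MvPolynomial (Fin n) K) : Prop :=
  (∀ i j, (L i j).IsHomogeneous 1) ∧
  (∀ js : Fin n → ℕ, ∀ k : Fin n,
      (X k : MvPolynomial (Fin n) K) ∈
        Submodule.span K (Set.range fun i => L i (js i))) ∧
  (∃ N : ℕ, ∀ i : Fin n, ∀ j : ℕ, N < j → L i j = L i N)

/-- The distraction of the monomial `x^d`: `∏ i ∏_{j=1}^{d i} L i j`. -/
def distrMon (n : ℕ) (K : Type*) [Field K]
    (L : Fin n → ℕ → MvPolynomial (Fin n) K) (d : Fin n →₀ ℕ) :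
    MvPolynomial (Fin n) K :=
  ∏ i, ∏ j ∈ Finset.range (d i), L i (j + 1)

/-- The distraction operator `D_L`, extended `K`-linearly from monomials to all of `P`. -/
def distr (n : ℕ) (K : Type*) [Field K]
    (L : Fin n → ℕ → MvPolynomial (Fin n) K) (f : MvPolynomial (Fin n) K) :
    MvPolynomial (Fin n) K :=
  ∑ d ∈ f.support, coeff d f • distrMon n K L d

section Aux

variable {n : ℕ} {K : Type*} [Field K] (L : Fin n → ℕ → MvPolynomial (Fin n) K)

lemma distr_monomial (d : Fin n →₀ ℕ) :
    distr n K L (monomial d (1 : K)) = distrMon n K L d := by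
  simp [distr, support_monomial, coeff_monomial]

lemma distrMon_isHomogeneous (hL : ∀ i j, (L i j).IsHomogeneous 1) (d : Fin n →₀ ℕ) :
    (distrMon n K L d).IsHomogeneous (∑ i, d i) := by
  apply MvPolynomial.IsHomogeneous.prod
  intro i _
  have h := MvPolynomial.IsHomogeneous.prod (Finset.range (d i))
    (fun j => L i (j + 1)) (fun _ => 1) (fun j _ => hL i (j + 1))
  simpa using h

lemma distrMon_add_single (d : Fin n →₀ ℕ) (i : Fin n) :
    distrMon n K L (d + Finsupp.single i 1) = L i (d i + 1) * distrMon n K L d := by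
  unfold distrMon
  rw [← Finset.mul_prod_erase Finset.univ _ (Finset.mem_univ i),
      ← Finset.mul_prod_erase Finset.univ
        (fun i' => ∏ j ∈ Finset.range (d i'), L i' (j + 1)) (Finset.mem_univ i)]
  have h1 : ((d + Finsupp.single i 1) : Fin n →₀ ℕ) i = d i + 1 := by simp
  have h3 : ∀ i' ∈ Finset.univ.erase i,
      ∏ j ∈ Finset.range (((d + Finsupp.single i 1) : Fin n →₀ ℕ) i'), L i' (j + 1)
        = ∏ j ∈ Finset.range (d i'), L i' (j + 1) := by
    intro i' hi'
    have h2 : ((d + Finsupp.single i 1) : Fin n →₀ ℕ) i' = d i' := by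
      simp [Finsupp.single_apply, Ne.symm (Finset.mem_erase.mp hi').1]
    rw [h2]
  rw [Finset.prod_congr rfl h3, h1, Finset.prod_range_succ]
  ring

lemma distrMon_factor {s d : Fin n →₀ ℕ} (h : s ≤ d) :
    distrMon n K L d
      = distrMon n K L s * ∏ i, ∏ j ∈ Finset.Ico (s i) (d i), L i (j + 1) := by
  unfold distrMon
  rw [← Finset.prod_mul_distrib]
  apply Finset.prod_congr rfl
  intro i _
  simp only [Finset.range_eq_Ico]
  rw [← Finset.prod_Ico_consecutive _ (Nat.zero_le (s i)) (Finsupp.le_def.mp h i)]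

end Aux

/-- for a monomial ideal `I = (t_1,…,t_r)`, the image `D_L(I)` is a homogeneous
ideal of `P`, namely the ideal generated by `D_L(t_1),…,D_L(t_r)`. -/
theorem distr_monomialIdeal (n : ℕ) (K : Type*) [Field K] [Infinite K]
    (L : Fin n → ℕ → MvPolynomial (Fin n) K) (hL : IsDistractionMatrix n K L)
    (r : ℕ) (t : Fin r → (Fin n →₀ ℕ))
    (I : Ideal (MvPolynomial (Fin n) K))
    (hI : I = Ideal.span (Set.range fun i => monomial (t i) (1 : K))) :
    Submodule.span K (distr n K L '' I) =
      Submodule.restrictScalars K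
        (Ideal.span (Set.range fun i => distr n K L (monomial (t i) (1 : K)))) ∧
    ∀ f ∈ Ideal.span (Set.range fun i => distr n K L (monomial (t i) (1 : K))),
      ∀ m : ℕ, homogeneousComponent m f ∈
        Ideal.span (Set.range fun i => distr n K L (monomial (t i) (1 : K))) := by
  classical
  obtain ⟨hhom, hspan, -⟩ := hL
  set S : Set (Fin n →₀ ℕ) := {d | ∃ i, t i ≤ d} with hS
  set M : Submodule K (MvPolynomial (Fin n) K) :=
    Submodule.span K (distrMon n K L '' S) with hM
  set J : Ideal (MvPolynomial (Fin n) K) :=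
    Ideal.span (Set.range fun i => distr n K L (monomial (t i) (1 : K))) with hJ
  -- J described as ideal span of distrMon (t i)
  have hJ' : J = Ideal.span (Set.range fun i => distrMon n K L (t i)) := by
    simp only [hJ, distr_monomial]
  -- membership in I
  have hmemI : ∀ f, f ∈ I ↔ ∀ d ∈ f.support, d ∈ S := by
    intro f
    rw [hI]
    have : (Set.range fun i => monomial (t i) (1 : K))
        = (fun s => monomial s (1 : K)) '' Set.range t := by
      rw [← Set.range_comp]; rfl
    rw [this, mem_ideal_span_monomial_image]
    simp [hS, Set.mem_setOf_eq]
  -- factorization: d ∈ S → distrMon d ∈ J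
  have hfac : ∀ d ∈ S, distrMon n K L d ∈ J := by
    rintro d ⟨i, hi⟩
    rw [hJ', distrMon_factor L hi]
    exact Ideal.mul_mem_right _ _ (Ideal.subset_span ⟨i, rfl⟩)
  -- X k * (elements of M) stay in M
  have hXmul : ∀ (k : Fin n) (f : MvPolynomial (Fin n) K), f ∈ M → X k * f ∈ M := by
    intro k f hf
    refine Submodule.span_induction
      (p := fun g _ => X k * g ∈ M) ?_ ?_ ?_ ?_ hf
    · rintro g ⟨d, hd, rfl⟩
      have hx := hspan (fun i => d i + 1) k
      refine Submodule.span_induction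
        (p := fun p _ => p * distrMon n K L d ∈ M) ?_ ?_ ?_ ?_ hx
      · rintro p ⟨i, rfl⟩
        rw [← distrMon_add_single]
        apply Submodule.subset_span
        refine ⟨d + Finsupp.single i 1, ?_, rfl⟩
        obtain ⟨i', hi'⟩ := hd
        exact ⟨i', le_trans hi' (le_add_of_nonneg_right zero_le)⟩
      · simp
      · intro p q _ _ hp hq; rw [add_mul]; exact M.add_mem hp hq
      · intro c p _ hp; rw [smul_mul_assoc]; exact M.smul_mem c hp
    · simp
    · intro g h _ _ hg hh; rw [mul_add]; exact M.add_mem hg hh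
    · intro c g _ hg; rw [mul_smul_comm]; exact M.smul_mem c hg
  -- general multiplication
  have hmul : ∀ (p f : MvPolynomial (Fin n) K), f ∈ M → p * f ∈ M := by
    intro p
    induction p using MvPolynomial.induction_on with
    | C c => intro f hf; rw [MvPolynomial.C_mul']; exact M.smul_mem c hf
    | add p q hp hq => intro f hf; rw [add_mul]; exact M.add_mem (hp f hf) (hq f hf)
    | mul_X p k hp => intro f hf; rw [mul_assoc]; exact hp _ (hXmul k f hf)
  -- M = J as sets
  have hMJ : M = Submodule.restrictScalars K J := by
    apply le_antisymm
    · rw [hM, Submodule.span_le]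
      rintro g ⟨d, hd, rfl⟩
      exact hfac d hd
    · intro f hf
      rw [Submodule.restrictScalars_mem, hJ'] at hf
      refine Submodule.span_induction (p := fun g _ => g ∈ M) ?_ ?_ ?_ ?_ hf
      · rintro p ⟨i, rfl⟩
        exact Submodule.subset_span ⟨t i, ⟨i, le_refl _⟩, rfl⟩
      · exact M.zero_mem
      · intro a b _ _ ha hb; exact M.add_mem ha hb
      · intro c a _ ha; rw [smul_eq_mul]; exact hmul c a ha
  constructor
  · rw [← hMJ]
    apply le_antisymm
    · rw [Submodule.span_le]
      rintro g ⟨f, hf, rfl⟩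
      rw [SetLike.mem_coe, hmemI] at hf
      rw [show distr n K L f = ∑ d ∈ f.support, coeff d f • distrMon n K L d from rfl]
      exact M.sum_mem fun d hd =>
        M.smul_mem _ (Submodule.subset_span ⟨d, hf d hd, rfl⟩)
    · rw [hM, Submodule.span_le]
      rintro g ⟨d, hd, rfl⟩
      apply Submodule.subset_span
      refine ⟨monomial d (1 : K), ?_, distr_monomial L d⟩
      rw [SetLike.mem_coe, hmemI]
      intro d' hd'
      rw [support_monomial] at hd'
      simp only [one_ne_zero, if_false, Finset.mem_singleton] at hd'
      rwa [hd']
  · intro f hf m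
    have hfM : f ∈ M := by rw [hMJ]; exact hf
    have key : ∀ m, homogeneousComponent m f ∈ M := by
      refine Submodule.span_induction
        (p := fun g _ => ∀ m, homogeneousComponent m g ∈ M) ?_ ?_ ?_ ?_ hfM
      · rintro g ⟨d, hd, rfl⟩ m
        rw [homogeneousComponent_of_mem
          ((mem_homogeneousSubmodule _ _).mpr (distrMon_isHomogeneous L hhom d))]
        split
        · exact Submodule.subset_span ⟨d, hd, rfl⟩
        · exact M.zero_mem
      · intro m; simp
      · intro a b _ _ ha hb m; rw [map_add]; exact M.add_mem (ha m) (hb m)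
      · intro c a _ ha m; rw [map_smul]; exact M.smul_mem c (ha m)
    have h2 := key m
    rw [hMJ] at h2
    exact h2
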